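/- Type Safety of GS (Proposition 1): let e be a closed GS expression. If ⊢ e : T (i.e., e successfully elaborates to a GSCheck expression of type T), then evaluation of e terminates with a result r, where r is either a GSCheck value v or the error term error; in particular well-typed closed expressions do not get stuck. -/

import Mathlib

open Classical

noncomputable section

namespace GS

/-! ## Base types, constants, primitive operations -/

/-- Base types. -/
inductive BaseTy where
  | real
  | bool
deriving DecidableEq

/-- Constants (literal values of base types). -/
inductive Const where
  | r : ℝ → Const
  | b : Bool → Const

/-- Primitive (binary) operations. -/
inductive Op where
  | add
  | mul
  | le

/-! ## Gradual sensitivities: sensitivity intervals -/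

/-- A gradual sensitivity: a valid interval `[lo,hi]` with `0 ≤ lo ≤ hi ≤ ∞`
over the extended nonnegative reals. The unknown sensitivity `?` is `[0,∞]`
and a fully precise sensitivity `s` is `[s,s]`. -/
structure SI where
  lo : ENNReal
  hi : ENNReal
  isle : lo ≤ hi

/-- Interval addition. -/
def SI.add (a b : SI) : SI := ⟨a.lo + b.lo, a.hi + b.hi, add_le_add a.isle b.isle⟩

/-- Interval multiplication. -/
def SI.mul (a b : SI) : SI := ⟨a.lo * b.lo, a.hi * b.hi, mul_le_mul' a.isle b.isle⟩

/-- Interval join. -/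
def SI.join (a b : SI) : SI := ⟨a.lo ⊔ b.lo, a.hi ⊔ b.hi, sup_le_sup a.isle b.isle⟩

/-- Precision on gradual sensitivities: interval inclusion. -/
def SI.prec (a b : SI) : Prop := b.lo ≤ a.lo ∧ a.hi ≤ b.hi

/-- Consistent sensitivity ordering: `[s₁,s₂] ⪅ [s₃,s₄]` iff `s₁ ≤ s₄`. -/
def SI.cle (a b : SI) : Prop := a.lo ≤ b.hi

/-- A gradual sensitivity is bounded if it does not contain ∞. -/
def SI.bounded (a : SI) : Prop := a.hi ≠ ⊤

/-- A gradual sensitivity is static (fully precise) if it is a singleton. -/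
def SI.static (a : SI) : Prop := a.lo = a.hi

/-- The zero sensitivity. -/
def SI.zero : SI := ⟨0, 0, le_rfl⟩

/-- The infinite sensitivity. -/
def SI.inf : SI := ⟨⊤, ⊤, le_rfl⟩

/-- The unknown sensitivity `? = [0,∞]`. -/
def SI.unknown : SI := ⟨0, ⊤, le_top⟩

/-! ## Gradual sensitivity environments -/

/-- A gradual sensitivity environment: a map from distance variables to
gradual sensitivities. -/
abbrev GEnv := String → SI

/-- Pointwise addition of sensitivity environments. -/
def addE (S1 S2 : GEnv) : GEnv := fun x => (S1 x).add (S2 x)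

/-- Scaling of a sensitivity environment by a gradual sensitivity. -/
def scaleE (g : SI) (S : GEnv) : GEnv := fun x => g.mul (S x)

/-- The empty sensitivity environment ∅. -/
def zeroE : GEnv := fun _ => SI.zero

/-- Pointwise precision of sensitivity environments. -/
def precE (S1 S2 : GEnv) : Prop := ∀ x, (S1 x).prec (S2 x)

/-- A sensitivity environment is bounded if no interval contains ∞. -/
def boundedE (S : GEnv) : Prop := ∀ x, (S x).bounded

/-- Substitution [Sr/r]S of a sensitivity environment for a distance
variable in a sensitivity environment. -/
def substDVE (r : String) (Sr : GEnv) (S : GEnv) : GEnv :=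
  fun y => (if y = r then SI.zero else S y).add ((S r).mul (Sr y))

/-! ## GS types -/

/-- GS types g; `arrow g₁ S₁ g₂ S₂` is the function type g₁^{S₁} → g₂^{S₂};
`all r g S` is the distance abstraction type ∀r. g^{S}. -/
inductive GTy where
  | base : BaseTy → GTy
  | arrow : GTy → GEnv → GTy → GEnv → GTy
  | all : String → GTy → GEnv → GTy

/-- Sensitivity types T = g^Σ. -/
abbrev CTy := GTy × GEnv

/-- Substitution [Sr/r] of a sensitivity environment for a distance variable
in a type (recursively in all nested sensitivity environments, respecting
the ∀-binder). -/
def substT (r : String) (Sr : GEnv) : GTy → GTy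
  | .base B => .base B
  | .arrow g1 S1 g2 S2 =>
      .arrow (substT r Sr g1) (substDVE r Sr S1) (substT r Sr g2) (substDVE r Sr S2)
  | .all r' g S =>
      if r' = r then .all r' g S
      else .all r' (substT r Sr g) (substDVE r Sr S)

/-- Size of a type (used for termination of the logical relations). -/
def GTy.size : GTy → ℕ
  | .base _ => 1
  | .arrow g1 _ g2 _ => g1.size + g2.size + 1
  | .all _ g _ => g.size + 1

theorem size_substT (r : String) (Sr : GEnv) (g : GTy) :
    (substT r Sr g).size = g.size := by
  induction g with
  | base B => rfl
  | arrow g1 S1 g2 S2 ih1 ih2 => simp [substT, GTy.size, ih1, ih2]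
  | all r' g S ih => by_cases h : r' = r <;> simp [substT, h, GTy.size, ih]

/-- Precision on GS types (covariant everywhere). -/
inductive TyPrec : GTy → GTy → Prop
  | base : TyPrec (.base B) (.base B)
  | arrow : TyPrec g1 g1' → precE S1 S1' → TyPrec g2 g2' → precE S2 S2' →
      TyPrec (.arrow g1 S1 g2 S2) (.arrow g1' S1' g2' S2')
  | all : TyPrec g g' → precE S S' →
      TyPrec (.all r g S) (.all r g' S')

/-- Precision on sensitivity types. -/
def CTyPrec (T T' : CTy) : Prop := TyPrec T.1 T'.1 ∧ precE T.2 T'.2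

/-! ## Evidence, interior and consistent transitivity -/

/-- An evidence for a consistent subtyping judgment: a pair of sensitivity
types. -/
abbrev Ev := CTy × CTy

/-- Evidence precision ⊑² (componentwise precision). -/
def EvPrec (ε ε' : Ev) : Prop := CTyPrec ε.1 ε'.1 ∧ CTyPrec ε.2 ε'.2

/-- Interior of two sensitivity environments (pointwise interior of the
consistent sensitivity ordering). -/
def interE (S1 S2 : GEnv) : Option (GEnv × GEnv) :=
  if h : ∀ x, (S1 x).lo ≤ (S2 x).hi then
    some (fun x => ⟨(S1 x).lo, (S1 x).hi ⊓ (S2 x).hi, le_inf (S1 x).isle (h x)⟩,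
          fun x => ⟨(S1 x).lo ⊔ (S2 x).lo, (S2 x).hi, sup_le (h x) (S2 x).isle⟩)
  else none

/-- Interior of two GS types (evidence for a consistent subtyping judgment,
contravariant in function domains). -/
def interT : GTy → GTy → Option (GTy × GTy)
  | .base B1, .base B2 => if B1 = B2 then some (.base B1, .base B2) else none
  | .arrow a1 sa1 b1 sb1, .arrow a2 sa2 b2 sb2 => do
      let (a2', a1') ← interT a2 a1
      let (sa2', sa1') ← interE sa2 sa1
      let (b1', b2') ← interT b1 b2
      let (sb1', sb2') ← interE sb1 sb2
      pure (.arrow a1' sa1' b1' sb1', .arrow a2' sa2' b2' sb2')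
  | .all r1 g1 s1, .all r2 g2 s2 =>
      if r1 = r2 then do
        let (g1', g2') ← interT g1 g2
        let (s1', s2') ← interE s1 s2
        pure (.all r1 g1' s1', .all r2 g2' s2')
      else none
  | _, _ => none
termination_by t1 t2 => t1.size + t2.size
decreasing_by all_goals simp [GTy.size] <;> omega

/-- Interior of two sensitivity types: the initial evidence for their
consistent subtyping judgment. -/
def interC (T1 T2 : CTy) : Option Ev := do
  let (g1, g2) ← interT T1.1 T2.1
  let (s1, s2) ← interE T1.2 T2.2
  pure ((g1, s1), (g2, s2))

/-- Consistent transitivity on (pointwise) sensitivity environments: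
combines evidences ⟨s1,s2⟩ and ⟨s3,s4⟩. -/
def ctrE (s1 s2 s3 s4 : GEnv) : Option (GEnv × GEnv) :=
  if h : ∀ x, (s1 x).lo ≤ (s1 x).hi ⊓ (s2 x).hi ⊓ (s3 x).hi ∧
              (s2 x).lo ⊔ (s3 x).lo ⊔ (s4 x).lo ≤ (s4 x).hi then
    some (fun x => ⟨(s1 x).lo, (s1 x).hi ⊓ (s2 x).hi ⊓ (s3 x).hi, (h x).1⟩,
          fun x => ⟨(s2 x).lo ⊔ (s3 x).lo ⊔ (s4 x).lo, (s4 x).hi, (h x).2⟩)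
  else none

/-- Consistent transitivity on GS types: combines evidences ⟨t1,t2⟩ and
⟨t3,t4⟩ (contravariant in function domains). -/
def ctrT : GTy → GTy → GTy → GTy → Option (GTy × GTy)
  | .base B1, .base B2, .base B3, .base B4 =>
      if B1 = B2 ∧ B2 = B3 ∧ B3 = B4 then some (.base B1, .base B4) else none
  | .arrow a1 sa1 b1 sb1, .arrow a2 sa2 b2 sb2,
    .arrow a3 sa3 b3 sb3, .arrow a4 sa4 b4 sb4 => do
      let (a4', a1') ← ctrT a4 a3 a2 a1
      let (sa4', sa1') ← ctrE sa4 sa3 sa2 sa1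
      let (b1', b4') ← ctrT b1 b2 b3 b4
      let (sb1', sb4') ← ctrE sb1 sb2 sb3 sb4
      pure (.arrow a1' sa1' b1' sb1', .arrow a4' sa4' b4' sb4')
  | .all r1 g1 s1, .all r2 g2 s2, .all r3 g3 s3, .all r4 g4 s4 =>
      if r1 = r2 ∧ r2 = r3 ∧ r3 = r4 then do
        let (g1', g4') ← ctrT g1 g2 g3 g4
        let (s1', s4') ← ctrE s1 s2 s3 s4
        pure (.all r1 g1' s1', .all r4 g4' s4')
      else none
  | _, _, _, _ => none
termination_by t1 t2 t3 t4 => t1.size + t2.size + t3.size + t4.size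
decreasing_by all_goals simp [GTy.size] <;> omega

/-- Consistent transitivity on evidences: ε₁ ∘ ε₂, undefined when transitivity
is refuted. -/
def ctrC (e1 e2 : Ev) : Option Ev := do
  let (g1, g4) ← ctrT e1.1.1 e1.2.1 e2.1.1 e2.2.1
  let (s1, s4) ← ctrE e1.1.2 e1.2.2 e2.1.2 e2.2.2
  pure ((g1, s1), (g4, s4))

/-! ## GSCheck: the internal evidence language -/

/-- GSCheck expressions: ascriptions `ascr ε e T` carry an evidence ε and an
ascribed sensitivity type T; `err` is the runtime error term. -/
inductive CExpr where
  | const : Const → CExpr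
  | op : Op → CExpr → CExpr → CExpr
  | var : String → CExpr
  | lam : String → CTy → CExpr → CExpr
  | app : CExpr → CExpr → CExpr
  | tlam : String → CExpr → CExpr
  | tapp : CExpr → GEnv → CExpr
  | ascr : Ev → CExpr → CTy → CExpr
  | err : CExpr

mutual
/-- Simple values u ::= c | λ(x:T).e | Λr.v. -/
inductive Simple : CExpr → Prop
  | const : Simple (.const c)
  | lam : Simple (.lam x T e)
  | tlam : IsVal v → Simple (.tlam r v)
/-- Values v ::= ε u :: T. -/
inductive IsVal : CExpr → Prop
  | mk : Simple u → IsVal (.ascr ε u T)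
end

/-- Term substitution. -/
def csubst (x : String) (v : CExpr) : CExpr → CExpr
  | .const c => .const c
  | .op o a b => .op o (csubst x v a) (csubst x v b)
  | .var y => if y = x then v else .var y
  | .lam y T e => if y = x then .lam y T e else .lam y T (csubst x v e)
  | .app a b => .app (csubst x v a) (csubst x v b)
  | .tlam r e => .tlam r (csubst x v e)
  | .tapp e S => .tapp (csubst x v e) S
  | .ascr ε e T => .ascr ε (csubst x v e) T
  | .err => .err

/-- Substitution of a distance variable in a sensitivity type. -/
def substCTy (r : String) (Sr : GEnv) (T : CTy) : CTy :=
  (substT r Sr T.1, substDVE r Sr T.2)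

/-- Substitution of a distance variable in an evidence. -/
def substEv (r : String) (Sr : GEnv) (ε : Ev) : Ev :=
  (substCTy r Sr ε.1, substCTy r Sr ε.2)

/-- Substitution of a distance variable in a GSCheck expression. -/
def dsubst (r : String) (Sr : GEnv) : CExpr → CExpr
  | .const c => .const c
  | .op o a b => .op o (dsubst r Sr a) (dsubst r Sr b)
  | .var y => .var y
  | .lam y T e => .lam y (substCTy r Sr T) (dsubst r Sr e)
  | .app a b => .app (dsubst r Sr a) (dsubst r Sr b)
  | .tlam r' e => if r' = r then .tlam r' e else .tlam r' (dsubst r Sr e)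
  | .tapp e S => .tapp (dsubst r Sr e) (substDVE r Sr S)
  | .ascr ε e T => .ascr (substEv r Sr ε) (dsubst r Sr e) (substCTy r Sr T)
  | .err => .err

/-- Denotation of the primitive operations. -/
def opDenote : Op → Const → Const → Option Const
  | .add, .r a, .r b => some (.r (a + b))
  | .mul, .r a, .r b => some (.r (a * b))
  | .le, .r a, .r b => some (.b (if a ≤ b then true else false))
  | _, _, _ => none

/-- Sensitivity typing of the primitive operations: addition adds the
sensitivity environments; multiplication and comparison scale by ∞. -/
def opCTy : Op → CTy → CTy → Option CTy
  | .add, (.base .real, S1), (.base .real, S2) => some (.base .real, addE S1 S2)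
  | .mul, (.base .real, S1), (.base .real, S2) =>
      some (.base .real, scaleE SI.inf (addE S1 S2))
  | .le, (.base .real, S1), (.base .real, S2) =>
      some (.base .bool, scaleE SI.inf (addE S1 S2))
  | _, _, _ => none

/-- Lifting of operation typing to evidences. -/
def opEv (o : Op) (ε1 ε2 : Ev) : Option Ev := do
  let a ← opCTy o ε1.1 ε2.1
  let b ← opCTy o ε1.2 ε2.2
  pure (a, b)

/-- Domain of a function sensitivity type. -/
def domC : CTy → Option CTy
  | (.arrow g1 S1 _ _, _) => some (g1, S1)
  | _ => none

/-- Codomain of a function sensitivity type (adding the function's own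
top-level sensitivity environment). -/
def codC : CTy → Option CTy
  | (.arrow _ _ g2 S2, S) => some (g2, addE S2 S)
  | _ => none

/-- Instantiation of a distance-abstraction sensitivity type. -/
def instC (T : CTy) (Sr : GEnv) : Option CTy :=
  match T with
  | (.all r g Sg, S) => some (substT r Sr g, addE (substDVE r Sr Sg) S)
  | _ => none

/-- Inversion of an evidence for the domain (contravariant). -/
def domEv (ε : Ev) : Option Ev := do
  let d2 ← domC ε.2
  let d1 ← domC ε.1
  pure (d2, d1)

/-- Inversion of an evidence for the codomain. -/
def codEv (ε : Ev) : Option Ev := do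
  let c1 ← codC ε.1
  let c2 ← codC ε.2
  pure (c1, c2)

/-- Inversion of an evidence for instantiation. -/
def instEv (ε : Ev) (Sr : GEnv) : Option Ev := do
  let i1 ← instC ε.1 Sr
  let i2 ← instC ε.2 Sr
  pure (i1, i2)

/-- Reduction of GSCheck (the notions of reduction of Figure 6 together with
the congruence closure under evaluation contexts and error propagation). -/
inductive Step : CExpr → CExpr → Prop
  | op : opDenote o c1 c2 = some c → opEv o ε1 ε2 = some ε → opCTy o T1 T2 = some T →
      Step (.op o (.ascr ε1 (.const c1) T1) (.ascr ε2 (.const c2) T2))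
           (.ascr ε (.const c) T)
  | appOk : Simple u → domEv ε = some εd → ctrC ε1 εd = some ε' →
      codEv ε = some εc → codC T = some Tc →
      Step (.app (.ascr ε (.lam x T1' eb) T) (.ascr ε1 u T1))
           (.ascr εc (csubst x (.ascr ε' u T1') eb) Tc)
  | appErr : Simple u → domEv ε = some εd → ctrC ε1 εd = none →
      Step (.app (.ascr ε (.lam x T1' eb) T) (.ascr ε1 u T1)) .err
  | inst : IsVal v → instEv ε Sr = some ε' → instC T Sr = some T' →
      Step (.tapp (.ascr ε (.tlam r v) T) Sr) (.ascr ε' (dsubst r Sr v) T')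
  | ascrOk : Simple u → ctrC ε' ε = some ε'' →
      Step (.ascr ε (.ascr ε' u T') T) (.ascr ε'' u T)
  | ascrErr : Simple u → ctrC ε' ε = none →
      Step (.ascr ε (.ascr ε' u T') T) .err
  -- congruence (evaluation contexts)
  | opL : Step e1 e1' → Step (.op o e1 e2) (.op o e1' e2)
  | opR : IsVal v → Step e2 e2' → Step (.op o v e2) (.op o v e2')
  | appL : Step e1 e1' → Step (.app e1 e2) (.app e1' e2)
  | appR : IsVal v → Step e2 e2' → Step (.app v e2) (.app v e2')
  | tappC : Step e e' → Step (.tapp e S) (.tapp e' S)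
  | tlamC : Step e e' → Step (.tlam r e) (.tlam r e')
  | ascrC : Step e e' → Step (.ascr ε e T) (.ascr ε e' T)
  -- error propagation
  | opLErr : Step (.op o .err e2) .err
  | opRErr : IsVal v → Step (.op o v .err) .err
  | appLErr : Step (.app .err e2) .err
  | appRErr : IsVal v → Step (.app v .err) .err
  | tappErr : Step (.tapp .err S) .err
  | tlamErr : Step (.tlam r .err) .err
  | ascrErrP : Step (.ascr ε .err T) .err

/-- Zero or more reduction steps. -/
def Steps : CExpr → CExpr → Prop := Relation.ReflTransGen Step

/-- e ⇓ v : e reduces to the value v. -/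
def EvalsTo (e v : CExpr) : Prop := Steps e v ∧ IsVal v

/-- e ⇓ error. -/
def EvalsErr (e : CExpr) : Prop := Steps e .err

/-- Applying a substitution γ (a value environment) to a GSCheck expression. -/
def cmsubst (γ : String → CExpr) : CExpr → CExpr
  | .const c => .const c
  | .op o a b => .op o (cmsubst γ a) (cmsubst γ b)
  | .var y => γ y
  | .lam y T e => .lam y T (cmsubst (Function.update γ y (.var y)) e)
  | .app a b => .app (cmsubst γ a) (cmsubst γ b)
  | .tlam r e => .tlam r (cmsubst γ e)
  | .tapp e S => .tapp (cmsubst γ e) S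
  | .ascr ε e T => .ascr ε (cmsubst γ e) T
  | .err => .err

/-! ## Monitors, distances, canonical forms -/

/-- The monitor of a value: its evidence. -/
def monOf : CExpr → Option Ev
  | .ascr ε _ _ => some ε
  | _ => none

/-- The monitored sensitivity of a value: the static environment of lower
bounds of the sensitivity environment of the right-hand component of its
evidence. -/
def msOf : CExpr → String → ENNReal
  | .ascr (_, (_, S')) _ _ => fun r => (S' r).lo
  | _ => fun _ => 0

/-- Equi-precise monitors (each is more precise than the other). -/
def EquiEv (v1 v2 : CExpr) : Prop :=
  ∃ ε1 ε2, monOf v1 = some ε1 ∧ monOf v2 = some ε2 ∧ EvPrec ε1 ε2 ∧ EvPrec ε2 ε1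

/-- Canonical forms of a base type. -/
def CanonC (B : BaseTy) (v : CExpr) : Prop :=
  match B, v with
  | .real, .ascr _ (.const (.r _)) _ => True
  | .bool, .ascr _ (.const (.b _)) _ => True
  | _, _ => False

/-- The metric d_B on canonical forms of base types. -/
def dBC (B : BaseTy) (v1 v2 : CExpr) : ENNReal :=
  match B, v1, v2 with
  | .real, .ascr _ (.const (.r a)) _, .ascr _ (.const (.r b)) _ =>
      ENNReal.ofReal |a - b|
  | .bool, .ascr _ (.const (.b a)) _, .ascr _ (.const (.b b)) _ =>
      if a = b then 0 else ⊤
  | _, _, _ => ⊤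

/-- Distance environments: maps from distance variables to distances. -/
abbrev DEnv := String → ENNReal

/-- A distance environment is bounded if it avoids ∞. -/
def boundedD (dl : DEnv) : Prop := ∀ r, dl r ≠ ⊤

/-- Σ·δ for a static (fully precise) sensitivity environment Σ. -/
def dot (S : String → ENNReal) (dl : DEnv) : ENNReal := ∑' r, S r * dl r

/-- A static environment Σ' is (pointwise) within the gradual environment Σ,
i.e. Σ' is a static environment more precise than Σ. -/
def staticPrec (S' : String → ENNReal) (S : GEnv) : Prop :=
  ∀ r, (S r).lo ≤ S' r ∧ S' r ≤ (S r).hi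

/-! ## Logical relations (Figure 4): termination-insensitive -/

/-- Value logical relation (v₁,v₂) ∈ V_δ⟦g^Σ⟧ (Figure 4); the computation
relation E is inlined in the arrow and ∀ cases. -/
def Vrel (dl : DEnv) : GTy → GEnv → CExpr → CExpr → Prop
  | .base B, _, v1, v2 =>
      CanonC B v1 ∧ CanonC B v2 ∧
      dBC B v1 v2 ≤ dot (fun r => msOf v1 r ⊔ msOf v2 r) dl
  | .arrow g1 S1 g2 S2, S, v1, v2 =>
      IsVal v1 ∧ IsVal v2 ∧
      ∀ v1' v2', Vrel dl g1 S1 v1' v2' →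
        ∀ w1 w2, EvalsTo (.app v1 v1') w1 → EvalsTo (.app v2 v2') w2 →
          Vrel dl g2 (addE S2 S) w1 w2
  | .all r g Sg, S, v1, v2 =>
      IsVal v1 ∧ IsVal v2 ∧
      ∀ Sr, ∀ w1 w2, EvalsTo (.tapp v1 Sr) w1 → EvalsTo (.tapp v2 Sr) w2 →
        Vrel dl (substT r Sr g) (addE (substDVE r Sr Sg) S) w1 w2
termination_by g _ _ _ => g.size
decreasing_by all_goals simp [GTy.size, size_substT] <;> omega

/-- Computation logical relation (e₁,e₂) ∈ E_δ⟦g^Σ⟧. -/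
def Erel (dl : DEnv) (g : GTy) (S : GEnv) (e1 e2 : CExpr) : Prop :=
  ∀ v1 v2, EvalsTo e1 v1 → EvalsTo e2 v2 → Vrel dl g S v1 v2

/-- Type environments. -/
abbrev GTEnv := String → Option CTy

/-- Related substitutions (γ₁,γ₂) ∈ G_δ⟦Γ⟧. -/
def Grel (dl : DEnv) (Γ : GTEnv) (γ1 γ2 : String → CExpr) : Prop :=
  ∀ x T, Γ x = some T → Vrel dl T.1 T.2 (γ1 x) (γ2 x)

/-- Semantic gradual sensitivity typing Γ ⊨ e : T. -/
def SemGTy (Γ : GTEnv) (e : CExpr) (T : CTy) : Prop :=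
  ∀ dl γ1 γ2, Grel dl Γ γ1 γ2 → Erel dl T.1 T.2 (cmsubst γ1 e) (cmsubst γ2 e)

/-! ## Logical relations (Figure 5): termination-sensitive -/

/-- Termination-sensitive value logical relation (v₁,v₂) ∈ Vᵗˢ_δ⟦g^Σ⟧
(Figure 5); the computation relation Eᵗˢ is inlined in the arrow and ∀
cases. -/
def VrelTS (dl : DEnv) : GTy → GEnv → CExpr → CExpr → Prop
  | .base B, _, v1, v2 =>
      EquiEv v1 v2 ∧ CanonC B v1 ∧ CanonC B v2 ∧
      dBC B v1 v2 ≤ dot (fun r => msOf v1 r ⊔ msOf v2 r) dl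
  | .arrow g1 S1 g2 S2, S, v1, v2 =>
      EquiEv v1 v2 ∧ IsVal v1 ∧ IsVal v2 ∧
      ∀ v1' v2', VrelTS dl g1 S1 v1' v2' →
        ∀ w1, EvalsTo (.app v1 v1') w1 →
          ∃ w2, EvalsTo (.app v2 v2') w2 ∧ VrelTS dl g2 (addE S2 S) w1 w2
  | .all r g Sg, S, v1, v2 =>
      EquiEv v1 v2 ∧ IsVal v1 ∧ IsVal v2 ∧
      ∀ Sr, boundedE Sr →
        ∀ w1, EvalsTo (.tapp v1 Sr) w1 →
          ∃ w2, EvalsTo (.tapp v2 Sr) w2 ∧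
            VrelTS dl (substT r Sr g) (addE (substDVE r Sr Sg) S) w1 w2
termination_by g _ _ _ => g.size
decreasing_by all_goals simp [GTy.size, size_substT] <;> omega

/-- Termination-sensitive computation logical relation. -/
def ErelTS (dl : DEnv) (g : GTy) (S : GEnv) (e1 e2 : CExpr) : Prop :=
  ∀ v1, EvalsTo e1 v1 → ∃ v2, EvalsTo e2 v2 ∧ VrelTS dl g S v1 v2

/-- Termination-sensitive related substitutions (γ₁,γ₂) ∈ Gᵗˢ_δ⟦Γ⟧ (requires
a bounded distance environment). -/
def GrelTS (dl : DEnv) (Γ : GTEnv) (γ1 γ2 : String → CExpr) : Prop :=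
  boundedD dl ∧ ∀ x T, Γ x = some T → VrelTS dl T.1 T.2 (γ1 x) (γ2 x)

/-- Termination-sensitive semantic gradual sensitivity typing Γ ⊨ᵗˢ e : g^Σ
(requires the top-level sensitivity environment to be bounded). -/
def SemGTyTS (Γ : GTEnv) (e : CExpr) (T : CTy) : Prop :=
  boundedE T.2 ∧
  ∀ dl γ1 γ2, GrelTS dl Γ γ1 γ2 → ErelTS dl T.1 T.2 (cmsubst γ1 e) (cmsubst γ2 e)

/-! ## Gradual metric preservation -/

/-- δ-proximity of two substitutions for a base-type environment Γ:
values are canonical forms at bounded distance as measured by the join of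
their monitored sensitivities. -/
def Proximate (dl : DEnv) (Γ : GTEnv) (γ1 γ2 : String → CExpr) : Prop :=
  ∀ x B S, Γ x = some (.base B, S) →
    CanonC B (γ1 x) ∧ CanonC B (γ2 x) ∧
    dBC B (γ1 x) (γ2 x) ≤ dot (fun r => msOf (γ1 x) r ⊔ msOf (γ2 x) r) dl

/-- Termination-sensitive δ-proximity: additionally δ is bounded and
corresponding values carry equi-precise evidences. -/
def ProximateTS (dl : DEnv) (Γ : GTEnv) (γ1 γ2 : String → CExpr) : Prop :=
  boundedD dl ∧
  ∀ x B S, Γ x = some (.base B, S) →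
    EquiEv (γ1 x) (γ2 x) ∧ CanonC B (γ1 x) ∧ CanonC B (γ2 x) ∧
    dBC B (γ1 x) (γ2 x) ≤ dot (fun r => msOf (γ1 x) r ⊔ msOf (γ2 x) r) dl

/-- Gradual metric preservation GMP(Γ, e, B, Σ). -/
def GMP (Γ : GTEnv) (e : CExpr) (B : BaseTy) (S : GEnv) : Prop :=
  ∀ dl γ1 γ2, Proximate dl Γ γ1 γ2 →
    ∀ v1 v2, EvalsTo (cmsubst γ1 e) v1 → EvalsTo (cmsubst γ2 e) v2 →
      ∃ S' : String → ENNReal, staticPrec S' S ∧ dBC B v1 v2 ≤ dot S' dl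

/-- Termination-sensitive gradual metric preservation GMPᵗˢ(Γ, e, B, Σ). -/
def GMPts (Γ : GTEnv) (e : CExpr) (B : BaseTy) (S : GEnv) : Prop :=
  ∀ dl γ1 γ2, ProximateTS dl Γ γ1 γ2 →
    ∀ v1, EvalsTo (cmsubst γ1 e) v1 →
      ∃ v2, EvalsTo (cmsubst γ2 e) v2 ∧
        ∃ S' : String → ENNReal, staticPrec S' S ∧ dBC B v1 v2 ≤ dot S' dl

/-! ## The source language GS and type-directed elaboration (Figure 7) -/

/-- GS source expressions. -/
inductive GExpr where
  | const : Const → GExpr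
  | op : Op → GExpr → GExpr → GExpr
  | var : String → GExpr
  | lam : String → CTy → GExpr → GExpr
  | app : GExpr → GExpr → GExpr
  | tlam : String → GExpr → GExpr
  | tapp : GExpr → GEnv → GExpr
  | ascr : GExpr → CTy → GExpr

/-- The base type of a constant. -/
def constBTy : Const → BaseTy
  | .r _ => .real
  | .b _ => .bool

/-- Type-directed elaboration Γ ⊢ e ⇝ e' : T from GS to GSCheck (Figure 7);
it doubles as the syntactic type system of GS. -/
inductive Elab : GTEnv → GExpr → CExpr → CTy → Prop
  | const : interC (.base (constBTy c), zeroE) (.base (constBTy c), zeroE) = some ε →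
      Elab Γ (.const c) (.ascr ε (.const c) (.base (constBTy c), zeroE))
        (.base (constBTy c), zeroE)
  | op : Elab Γ a a' Ta → Elab Γ b b' Tb → opCTy o Ta Tb = some T →
      Elab Γ (.op o a b) (.op o a' b') T
  | var : Γ x = some T → Elab Γ (.var x) (.var x) T
  | lam : Elab (Function.update Γ x (some T1)) e e' T2 →
      interC (.arrow T1.1 T1.2 T2.1 T2.2, zeroE) (.arrow T1.1 T1.2 T2.1 T2.2, zeroE)
        = some ε →
      Elab Γ (.lam x T1 e)
        (.ascr ε (.lam x T1 e') (.arrow T1.1 T1.2 T2.1 T2.2, zeroE))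
        (.arrow T1.1 T1.2 T2.1 T2.2, zeroE)
  | app : Elab Γ a a' Ta → Elab Γ b b' Tb →
      domC Ta = some Td → interC Tb Td = some ε2 → codC Ta = some Tc →
      Elab Γ (.app a b) (.app a' (.ascr ε2 b' Td)) Tc
  | tlam : Elab Γ e e' T →
      interC (.all r T.1 T.2, zeroE) (.all r T.1 T.2, zeroE) = some ε →
      Elab Γ (.tlam r e) (.ascr ε (.tlam r e') (.all r T.1 T.2, zeroE))
        (.all r T.1 T.2, zeroE)
  | tapp : Elab Γ e e' T → instC T Sr = some T' →
      Elab Γ (.tapp e Sr) (.tapp e' Sr) T'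
  | ascr : Elab Γ e e' T → interC T T' = some ε →
      Elab Γ (.ascr e T') (.ascr ε e' T') T'

/-- The empty type environment. -/
def emptyEnv : GTEnv := fun _ => none

/-! ## Precision on expressions -/

/-- Precision on GS source expressions (the natural syntactic lifting of type
precision to terms). -/
inductive GPrec : GExpr → GExpr → Prop
  | const : GPrec (.const c) (.const c)
  | op : GPrec a a' → GPrec b b' → GPrec (.op o a b) (.op o a' b')
  | var : GPrec (.var x) (.var x)
  | lam : CTyPrec T T' → GPrec e e' → GPrec (.lam x T e) (.lam x T' e')
  | app : GPrec a a' → GPrec b b' → GPrec (.app a b) (.app a' b')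
  | tlam : GPrec e e' → GPrec (.tlam r e) (.tlam r e')
  | tapp : GPrec e e' → precE S S' → GPrec (.tapp e S) (.tapp e' S')
  | ascr : GPrec e e' → CTyPrec T T' → GPrec (.ascr e T) (.ascr e' T')

/-- Precision on GSCheck expressions (including evidences). -/
inductive CPrec : CExpr → CExpr → Prop
  | const : CPrec (.const c) (.const c)
  | op : CPrec a a' → CPrec b b' → CPrec (.op o a b) (.op o a' b')
  | var : CPrec (.var x) (.var x)
  | lam : CTyPrec T T' → CPrec e e' → CPrec (.lam x T e) (.lam x T' e')
  | app : CPrec a a' → CPrec b b' → CPrec (.app a b) (.app a' b')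
  | tlam : CPrec e e' → CPrec (.tlam r e) (.tlam r e')
  | tapp : CPrec e e' → precE S S' → CPrec (.tapp e S) (.tapp e' S')
  | ascr : EvPrec ε ε' → CPrec e e' → CTyPrec T T' →
      CPrec (.ascr ε e T) (.ascr ε' e' T')
  | err : CPrec .err .err

end GS
namespace GS

/-! ### Skeletons -/

theorem GTy.size_pos : ∀ g : GTy, 0 < g.size := by
  intro g; cases g <;> simp [GTy.size]

inductive Sk where
  | base : BaseTy → Sk
  | arrow : Sk → Sk → Sk
  | all : Sk → Sk

def skel : GTy → Sk
  | .base B => .base B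
  | .arrow g1 _ g2 _ => .arrow (skel g1) (skel g2)
  | .all _ g _ => .all (skel g)

theorem skel_substT (r : String) (Sr : GEnv) (g : GTy) :
    skel (substT r Sr g) = skel g := by
  induction g with
  | base B => rfl
  | arrow g1 S1 g2 S2 ih1 ih2 => simp [substT, skel, ih1, ih2]
  | all r' g S ih => by_cases h : r' = r <;> simp [substT, h, skel, ih]

theorem skel_base_inv {g : GTy} {B : BaseTy} (h : skel g = .base B) :
    g = .base B := by
  cases g <;> simp_all [skel]

theorem skel_arrow_inv {g : GTy} {s1 s2 : Sk} (h : skel g = .arrow s1 s2) :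
    ∃ a sa b sb, g = .arrow a sa b sb ∧ skel a = s1 ∧ skel b = s2 := by
  cases g <;> simp_all [skel]

theorem skel_all_inv {g : GTy} {s : Sk} (h : skel g = .all s) :
    ∃ r g' S, g = .all r g' S ∧ skel g' = s := by
  cases g <;> simp_all [skel]

def isArrow (g : GTy) : Prop := ∃ a sa b sb, g = GTy.arrow a sa b sb
def isAll (g : GTy) : Prop := ∃ r g' S, g = GTy.all r g' S

theorem substT_isArrow {g : GTy} (h : isArrow g) (r : String) (Sr : GEnv) :
    isArrow (substT r Sr g) := by
  obtain ⟨a, sa, b, sb, rfl⟩ := h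
  exact ⟨_, _, _, _, rfl⟩

theorem substT_isAll {g : GTy} (h : isAll g) (r : String) (Sr : GEnv) :
    isAll (substT r Sr g) := by
  obtain ⟨r', g', S, rfl⟩ := h
  by_cases hr : r' = r <;> simp [substT, hr] <;> exact ⟨_, _, _, rfl⟩

/-! ### Type erasure equivalence: same structure up to sensitivity environments -/

inductive TyEr : GTy → GTy → Prop where
  | base : TyEr (.base B) (.base B)
  | arrow : TyEr g1 g1' → TyEr g2 g2' →
      TyEr (.arrow g1 S1 g2 S2) (.arrow g1' S1' g2' S2')
  | all : TyEr g g' → TyEr (.all r g S) (.all r g' S')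

def CTyEr (T T' : CTy) : Prop := TyEr T.1 T'.1
def EvEr (ε ε' : Ev) : Prop := CTyEr ε.1 ε'.1 ∧ CTyEr ε.2 ε'.2

theorem tyEr_refl : ∀ g, TyEr g g := by
  intro g; induction g with
  | base B => exact .base
  | arrow g1 S1 g2 S2 ih1 ih2 => exact .arrow ih1 ih2
  | all r g S ih => exact .all ih

theorem ctyEr_refl (T : CTy) : CTyEr T T := tyEr_refl _
theorem evEr_refl (ε : Ev) : EvEr ε ε := ⟨ctyEr_refl _, ctyEr_refl _⟩

theorem tyEr_skel {g g'} (h : TyEr g g') : skel g = skel g' := by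
  induction h <;> simp [skel, *]

theorem tyEr_trans {g1 g2 g3} (h1 : TyEr g1 g2) (h2 : TyEr g2 g3) : TyEr g1 g3 := by
  induction h1 generalizing g3 with
  | base => cases h2; exact .base
  | arrow ha hb iha ihb => cases h2 with
    | arrow ha' hb' => exact .arrow (iha ha') (ihb hb')
  | all h ih => cases h2 with
    | all h' => exact .all (ih h')

theorem ctyEr_trans {T1 T2 T3} (h1 : CTyEr T1 T2) (h2 : CTyEr T2 T3) : CTyEr T1 T3 :=
  tyEr_trans h1 h2
theorem evEr_trans {e1 e2 e3} (h1 : EvEr e1 e2) (h2 : EvEr e2 e3) : EvEr e1 e3 :=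
  ⟨ctyEr_trans h1.1 h2.1, ctyEr_trans h1.2 h2.2⟩

theorem tyEr_base_inv {g B} (h : TyEr g (.base B)) : g = .base B := by
  cases h; rfl

theorem tyEr_arrow_inv {g a sa b sb} (h : TyEr g (.arrow a sa b sb)) :
    ∃ a' sa' b' sb', g = .arrow a' sa' b' sb' ∧ TyEr a' a ∧ TyEr b' b := by
  cases h with
  | arrow h1 h2 => exact ⟨_, _, _, _, rfl, h1, h2⟩

theorem tyEr_all_inv {g r g0 S} (h : TyEr g (.all r g0 S)) :
    ∃ g' S', g = .all r g' S' ∧ TyEr g' g0 := by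
  cases h with
  | all h1 => exact ⟨_, _, rfl, h1⟩

theorem substT_tyEr (r : String) (Sr : GEnv) : ∀ g, TyEr (substT r Sr g) g := by
  intro g; induction g with
  | base B => exact .base
  | arrow g1 S1 g2 S2 ih1 ih2 => exact .arrow ih1 ih2
  | all r' g S ih =>
    by_cases h : r' = r
    · simp only [substT, h, if_true]; exact .all (tyEr_refl _)
    · simp only [substT, h, if_false]; exact .all ih

theorem substCTy_er (r : String) (Sr : GEnv) (T : CTy) : CTyEr (substCTy r Sr T) T :=
  substT_tyEr r Sr T.1

theorem substEv_er (r : String) (Sr : GEnv) (ε : Ev) : EvEr (substEv r Sr ε) ε :=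
  ⟨substCTy_er r Sr ε.1, substCTy_er r Sr ε.2⟩

/-! ### Free term variables -/

def FVt : CExpr → Set String
  | .const _ => ∅
  | .op _ a b => FVt a ∪ FVt b
  | .var y => {y}
  | .lam y _ e => FVt e \ {y}
  | .app a b => FVt a ∪ FVt b
  | .tlam _ e => FVt e
  | .tapp e _ => FVt e
  | .ascr _ e _ => FVt e
  | .err => ∅

theorem csubst_not_mem {x : String} {w : CExpr} :
    ∀ e, x ∉ FVt e → csubst x w e = e := by
  intro e
  induction e with
  | const c => intro _; rfl
  | op o a b iha ihb =>
    intro h; simp [FVt] at h; simp [csubst, iha h.1, ihb h.2]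
  | var y =>
    intro h; simp [FVt] at h
    simp [csubst]; intro hyx; exact absurd hyx.symm h
  | lam y T e ih =>
    intro h; simp [FVt] at h
    by_cases hyx : y = x
    · simp [csubst, hyx]
    · simp [csubst, hyx, ih (fun hx => hyx ((h hx).symm) )]
  | app a b iha ihb =>
    intro h; simp [FVt] at h; simp [csubst, iha h.1, ihb h.2]
  | tlam r e ih => intro h; simp [FVt] at h; simp [csubst, ih h]
  | tapp e S ih => intro h; simp [FVt] at h; simp [csubst, ih h]
  | ascr ε e T ih => intro h; simp [FVt] at h; simp [csubst, ih h]
  | err => intro _; rfl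

theorem FVt_csubst {x : String} {w : CExpr} :
    ∀ e, FVt (csubst x w e) ⊆ (FVt e \ {x}) ∪ FVt w := by
  intro e
  induction e with
  | const c => simp [csubst, FVt]
  | op o a b iha ihb =>
    simp only [csubst, FVt]
    intro y hy
    rcases hy with hy | hy
    · rcases iha hy with h | h
      · exact Or.inl ⟨Or.inl h.1, h.2⟩
      · exact Or.inr h
    · rcases ihb hy with h | h
      · exact Or.inl ⟨Or.inr h.1, h.2⟩
      · exact Or.inr h
  | var y =>
    by_cases hyx : y = x
    · subst hyx; simp [csubst, FVt]
    · simp [csubst, FVt, hyx]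
  | lam y T e ih =>
    by_cases hyx : y = x
    · subst hyx; simp only [csubst, if_true, FVt]
      intro z hz; exact Or.inl ⟨hz, hz.2⟩
    · simp only [csubst, hyx, if_false, FVt]
      intro z hz
      rcases ih hz.1 with h | h
      · exact Or.inl ⟨⟨h.1, hz.2⟩, fun hzx => h.2 hzx⟩
      · exact Or.inr h
  | app a b iha ihb =>
    simp only [csubst, FVt]
    intro y hy
    rcases hy with hy | hy
    · rcases iha hy with h | h
      · exact Or.inl ⟨Or.inl h.1, h.2⟩
      · exact Or.inr h
    · rcases ihb hy with h | h
      · exact Or.inl ⟨Or.inr h.1, h.2⟩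
      · exact Or.inr h
  | tlam r e ih => simpa [csubst, FVt] using ih
  | tapp e S ih => simpa [csubst, FVt] using ih
  | ascr ε e T ih => simpa [csubst, FVt] using ih
  | err => simp [csubst, FVt]


/-! ### Erasure equivalence on expressions -/

inductive Er : CExpr → CExpr → Prop where
  | const : Er (.const c) (.const c)
  | op : Er a a' → Er b b' → Er (.op o a b) (.op o a' b')
  | var : Er (.var x) (.var x)
  | lam : CTyEr T T' → Er e e' → Er (.lam x T e) (.lam x T' e')
  | app : Er a a' → Er b b' → Er (.app a b) (.app a' b')
  | tlam : Er e e' → Er (.tlam r e) (.tlam r e')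
  | tapp : Er e e' → Er (.tapp e S) (.tapp e' S')
  | ascr : EvEr ε ε' → Er e e' → CTyEr T T' → Er (.ascr ε e T) (.ascr ε' e' T')
  | err : Er .err .err

theorem er_refl : ∀ e, Er e e := by
  intro e
  induction e with
  | const c => exact .const
  | op o a b iha ihb => exact .op iha ihb
  | var y => exact .var
  | lam y T e ih => exact .lam (ctyEr_refl _) ih
  | app a b iha ihb => exact .app iha ihb
  | tlam r e ih => exact .tlam ih
  | tapp e S ih => exact .tapp ih
  | ascr ε e T ih => exact .ascr (evEr_refl _) ih (ctyEr_refl _)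
  | err => exact .err

theorem er_trans {e1 e2 e3} (h1 : Er e1 e2) (h2 : Er e2 e3) : Er e1 e3 := by
  induction h1 generalizing e3 with
  | const => cases h2; exact .const
  | op ha hb iha ihb => cases h2 with
    | op ha' hb' => exact .op (iha ha') (ihb hb')
  | var => cases h2; exact .var
  | lam hT he ih => cases h2 with
    | lam hT' he' => exact .lam (ctyEr_trans hT hT') (ih he')
  | app ha hb iha ihb => cases h2 with
    | app ha' hb' => exact .app (iha ha') (ihb hb')
  | tlam he ih => cases h2 with
    | tlam he' => exact .tlam (ih he')
  | tapp he ih => cases h2 with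
    | tapp he' => exact .tapp (ih he')
  | ascr hε he hT ih => cases h2 with
    | ascr hε' he' hT' => exact .ascr (evEr_trans hε hε') (ih he') (ctyEr_trans hT hT')
  | err => cases h2; exact .err

theorem er_fvt {e e'} (h : Er e e') : FVt e = FVt e' := by
  induction h <;> simp [FVt, *]

theorem dsubst_er (r : String) (Sr : GEnv) : ∀ e, Er (dsubst r Sr e) e := by
  intro e
  induction e with
  | const c => exact .const
  | op o a b iha ihb => exact .op iha ihb
  | var y => exact .var
  | lam y T e ih => exact .lam (substCTy_er _ _ _) ih
  | app a b iha ihb => exact .app iha ihb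
  | tlam r' e ih =>
    by_cases h : r' = r
    · simp only [dsubst, h, if_true]; exact .tlam (er_refl _)
    · simp only [dsubst, h, if_false]; exact .tlam ih
  | tapp e S ih => exact .tapp ih
  | ascr ε e T ih => exact .ascr (substEv_er _ _ _) ih (substCTy_er _ _ _)
  | err => exact .err

def csize : CExpr → ℕ
  | .const _ => 1
  | .op _ a b => csize a + csize b + 1
  | .var _ => 1
  | .lam _ _ e => csize e + 1
  | .app a b => csize a + csize b + 1
  | .tlam _ e => csize e + 1
  | .tapp e _ => csize e + 1
  | .ascr _ e _ => csize e + 1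
  | .err => 1

theorem csize_pos : ∀ e, 0 < csize e := by
  intro e; cases e <;> simp [csize]

theorem er_val_aux : ∀ n,
    (∀ u u', csize u ≤ n → Er u' u → Simple u → Simple u') ∧
    (∀ v v', csize v ≤ n → Er v' v → IsVal v → IsVal v') := by
  intro n
  induction n with
  | zero =>
    constructor
    · intro u u' h; have := csize_pos u; omega
    · intro v v' h; have := csize_pos v; omega
  | succ n ih =>
    constructor
    · intro u u' hle her hs
      cases hs with
      | const => cases her; exact .const
      | lam => cases her with | lam _ _ => exact .lam
      | tlam hv =>
        cases her with
        | tlam he =>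
          refine .tlam (ih.2 _ _ ?_ he hv)
          simp [csize] at hle; omega
    · intro v v' hle her hv
      cases hv with
      | mk hs =>
        cases her with
        | ascr _ he _ =>
          refine .mk (ih.1 _ _ ?_ he hs)
          simp [csize] at hle; omega

theorem er_simple {u u'} (h : Er u' u) (hs : Simple u) : Simple u' :=
  (er_val_aux (csize u)).1 u u' le_rfl h hs

theorem er_isval {v v'} (h : Er v' v) (hv : IsVal v) : IsVal v' :=
  (er_val_aux (csize v)).2 v v' le_rfl h hv

theorem isval_dsubst {v} (hv : IsVal v) (r : String) (Sr : GEnv) :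
    IsVal (dsubst r Sr v) :=
  er_isval (dsubst_er r Sr v) hv

/-! ### The logical predicate -/

def GoodV : Sk → CExpr → Prop
  | .base B, v => ∃ Sa Sb Sc c,
      v = .ascr ((.base B, Sa), (.base B, Sb)) (.const c) (.base B, Sc) ∧
      constBTy c = B
  | .arrow s1 s2, v => ∃ (ε : Ev) (x : String) (Tx : CTy) (eb : CExpr)
      (gd : GTy) (Sd : GEnv) (gc : GTy) (Sc : GEnv) (ST : GEnv),
      v = .ascr ε (.lam x Tx eb) (.arrow gd Sd gc Sc, ST) ∧
      isArrow ε.1.1 ∧ isArrow ε.2.1 ∧ skel Tx.1 = s1 ∧ skel gc = s2 ∧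
      FVt eb ⊆ {x} ∧
      (∀ eb', Er eb' eb → ∀ w, GoodV s1 w →
        ∃ r, Steps (csubst x w eb') r ∧ (r = .err ∨ GoodV s2 r))
  | .all s, v => ∃ (ε : Ev) (r : String) (vb : CExpr) (r2 : String)
      (g' : GTy) (S' : GEnv) (ST : GEnv),
      v = .ascr ε (.tlam r vb) (.all r2 g' S', ST) ∧
      isAll ε.1.1 ∧ isAll ε.2.1 ∧ skel g' = s ∧ IsVal vb ∧
      (∀ vb', Er vb' vb → ∀ Sr, GoodV s (dsubst r Sr vb'))

def Safe (s : Sk) (e : CExpr) : Prop :=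
  ∃ r, Steps e r ∧ (r = .err ∨ GoodV s r)

theorem goodv_isval {s v} (hg : GoodV s v) : IsVal v := by
  cases s with
  | base B =>
    obtain ⟨Sa, Sb, Sc, c, rfl, _⟩ := hg
    exact .mk .const
  | arrow s1 s2 =>
    obtain ⟨ε, x, Tx, eb, gd, Sd, gc, Sc, ST, rfl, _⟩ := hg
    exact .mk .lam
  | all s =>
    obtain ⟨ε, r, vb, r2, g', S', ST, rfl, _, _, _, hvb, _⟩ := hg
    exact .mk (.tlam hvb)

theorem goodv_closed {s v} (hg : GoodV s v) : FVt v = ∅ := by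
  cases s with
  | base B =>
    obtain ⟨Sa, Sb, Sc, c, rfl, _⟩ := hg
    simp [FVt]
  | arrow s1 s2 =>
    obtain ⟨ε, x, Tx, eb, gd, Sd, gc, Sc, ST, rfl, _, _, _, _, hfv, _⟩ := hg
    simp only [FVt]
    rw [Set.diff_eq_empty]
    exact hfv
  | all s =>
    obtain ⟨ε, r, vb, r2, g', S', ST, rfl, _, _, _, hvb, hcond⟩ := hg
    simp only [FVt]
    have := goodv_closed (hcond vb (er_refl vb) zeroE)
    have h2 := er_fvt (dsubst_er r zeroE vb)
    rw [h2] at this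
    exact this

theorem goodv_form {s v} (hg : GoodV s v) :
    ∃ ε u T, v = .ascr ε u T ∧ Simple u := by
  cases s with
  | base B =>
    obtain ⟨Sa, Sb, Sc, c, rfl, _⟩ := hg
    exact ⟨_, _, _, rfl, .const⟩
  | arrow s1 s2 =>
    obtain ⟨ε, x, Tx, eb, gd, Sd, gc, Sc, ST, rfl, _⟩ := hg
    exact ⟨_, _, _, rfl, .lam⟩
  | all s =>
    obtain ⟨ε, r, vb, r2, g', S', ST, rfl, _, _, _, hvb, _⟩ := hg
    exact ⟨_, _, _, rfl, .tlam hvb⟩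

theorem goodv_er {s v v'} (h : Er v' v) (hg : GoodV s v) : GoodV s v' := by
  cases s with
  | base B =>
    obtain ⟨Sa, Sb, Sc, c, rfl, hc⟩ := hg
    cases h with
    | @ascr ε0 _ e0 _ T0 _ hε he hT =>
      cases he
      obtain ⟨⟨g1, s1⟩, ⟨g2, s2⟩⟩ := ε0
      obtain ⟨gT, sT⟩ := T0
      have h1 := tyEr_base_inv hε.1
      have h2 := tyEr_base_inv hε.2
      have h3 := tyEr_base_inv hT
      simp only at h1 h2 h3
      subst h1; subst h2; subst h3
      exact ⟨s1, s2, sT, c, rfl, hc⟩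
  | arrow s1 s2 =>
    obtain ⟨ε, x, Tx, eb, gd, Sd, gc, Sc, ST, rfl, hA1, hA2, hTx, hgc, hfv, hbody⟩ := hg
    cases h with
    | @ascr ε0 _ e0 _ T0 _ hε he hT =>
      cases he with
      | @lam Tx0 _ eb0 _ _ hTx0 heb =>
        obtain ⟨gT, sT⟩ := T0
        obtain ⟨gd0, sd0, gc0, sc0, hgT, _, hgc0⟩ := tyEr_arrow_inv hT
        simp only at hgT; subst hgT
        obtain ⟨a, sa, b, sb, hA1'⟩ := hA1
        obtain ⟨a2, sa2, b2, sb2, hA2'⟩ := hA2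
        have he1 : TyEr ε0.1.1 ε.1.1 := hε.1
        have he2 : TyEr ε0.2.1 ε.2.1 := hε.2
        rw [hA1'] at he1; rw [hA2'] at he2
        obtain ⟨a0, sa0, b0, sb0, h10, _, _⟩ := tyEr_arrow_inv he1
        obtain ⟨a0', sa0', b0', sb0', h20, _, _⟩ := tyEr_arrow_inv he2
        refine ⟨ε0, x, Tx0, eb0, gd0, sd0, gc0, sc0, sT, rfl,
          ⟨_, _, _, _, h10⟩, ⟨_, _, _, _, h20⟩, ?_, ?_, ?_, ?_⟩
        · rw [tyEr_skel hTx0, hTx]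
        · rw [tyEr_skel hgc0, hgc]
        · rw [er_fvt heb]; exact hfv
        · intro eb' her w hw
          exact hbody eb' (er_trans her heb) w hw
  | all s =>
    obtain ⟨ε, r, vb, r2, g', S', ST, rfl, hA1, hA2, hsk, hvb, hcond⟩ := hg
    cases h with
    | @ascr ε0 _ e0 _ T0 _ hε he hT =>
      cases he with
      | @tlam vb0 _ _ hvb0 =>
        obtain ⟨gT, sT⟩ := T0
        obtain ⟨g0, S0, hgT, hg0⟩ := tyEr_all_inv hT
        simp only at hgT; subst hgT
        obtain ⟨ra, ga, Sga, hA1'⟩ := hA1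
        obtain ⟨rb, gb, Sgb, hA2'⟩ := hA2
        have he1 : TyEr ε0.1.1 ε.1.1 := hε.1
        have he2 : TyEr ε0.2.1 ε.2.1 := hε.2
        rw [hA1'] at he1; rw [hA2'] at he2
        obtain ⟨ga0, Sa0, h10, _⟩ := tyEr_all_inv he1
        obtain ⟨gb0, Sb0, h20, _⟩ := tyEr_all_inv he2
        refine ⟨ε0, r, vb0, r2, g0, S0, sT, rfl,
          ⟨_, _, _, h10⟩, ⟨_, _, _, h20⟩, ?_, ?_, ?_⟩
        · rw [tyEr_skel hg0, hsk]
        · exact er_isval hvb0 hvb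
        · intro vb' her Sr
          exact hcond vb' (er_trans her hvb0) Sr


theorem goodv_dsubst {s v} (hg : GoodV s v) (r0 : String) (S0 : GEnv) :
    GoodV s (dsubst r0 S0 v) := by
  cases s with
  | base B =>
    obtain ⟨Sa, Sb, Sc, c, rfl, hc⟩ := hg
    simp only [dsubst, substEv, substCTy, substT]
    exact ⟨_, _, _, c, rfl, hc⟩
  | arrow s1 s2 =>
    obtain ⟨ε, x, Tx, eb, gd, Sd, gc, Sc, ST, rfl, hA1, hA2, hTx, hgc, hfv, hbody⟩ := hg
    simp only [dsubst]
    refine ⟨substEv r0 S0 ε, x, substCTy r0 S0 Tx, dsubst r0 S0 eb,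
      substT r0 S0 gd, substDVE r0 S0 Sd, substT r0 S0 gc, substDVE r0 S0 Sc,
      substDVE r0 S0 ST, ?_, ?_, ?_, ?_, ?_, ?_, ?_⟩
    · simp [substCTy, substT]
    · exact substT_isArrow hA1 r0 S0
    · exact substT_isArrow hA2 r0 S0
    · rw [substCTy, skel_substT]; exact hTx
    · rw [skel_substT]; exact hgc
    · rw [er_fvt (dsubst_er r0 S0 eb)]; exact hfv
    · intro eb' her w hw
      exact hbody eb' (er_trans her (dsubst_er r0 S0 eb)) w hw
  | all s =>
    obtain ⟨ε, r, vb, r2, g', S', ST, rfl, hA1, hA2, hsk, hvb, hcond⟩ := hg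
    simp only [dsubst]
    by_cases hr : r = r0
    · simp only [hr, if_true]
      refine ⟨substEv r0 S0 ε, r0, vb, ?_⟩
      by_cases hr2 : r2 = r0
      · refine ⟨r2, g', S', substDVE r0 S0 ST, ?_, substT_isAll hA1 r0 S0,
          substT_isAll hA2 r0 S0, hsk, hvb, ?_⟩
        · simp [substCTy, substT, hr2]
        · intro vb' her Sr; subst hr; exact hcond vb' her Sr
      · refine ⟨r2, substT r0 S0 g', substDVE r0 S0 S', substDVE r0 S0 ST, ?_,
          substT_isAll hA1 r0 S0, substT_isAll hA2 r0 S0, ?_, hvb, ?_⟩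
        · simp [substCTy, substT, hr2]
        · rw [skel_substT]; exact hsk
        · intro vb' her Sr; subst hr; exact hcond vb' her Sr
    · simp only [hr, if_false]
      refine ⟨substEv r0 S0 ε, r, dsubst r0 S0 vb, ?_⟩
      by_cases hr2 : r2 = r0
      · refine ⟨r2, g', S', substDVE r0 S0 ST, ?_, substT_isAll hA1 r0 S0,
          substT_isAll hA2 r0 S0, hsk, isval_dsubst hvb r0 S0, ?_⟩
        · simp [substCTy, substT, hr2]
        · intro vb' her Sr
          exact hcond vb' (er_trans her (dsubst_er r0 S0 vb)) Sr
      · refine ⟨r2, substT r0 S0 g', substDVE r0 S0 S', substDVE r0 S0 ST, ?_,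
          substT_isAll hA1 r0 S0, substT_isAll hA2 r0 S0, ?_, isval_dsubst hvb r0 S0, ?_⟩
        · simp [substCTy, substT, hr2]
        · rw [skel_substT]; exact hsk
        · intro vb' her Sr
          exact hcond vb' (er_trans her (dsubst_er r0 S0 vb)) Sr

/-! ### Shape lemmas for the evidence operations -/

theorem interT_base_shape {B g2 p} (h : interT (.base B) g2 = some p) :
    p = (.base B, .base B) := by
  cases g2 <;> rw [interT.eq_def] at h <;> simp at h
  obtain ⟨h1, h2⟩ := h
  subst h1; exact h2.symm

theorem interT_arrow_shape {a sa b sb g2 p}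
    (h : interT (.arrow a sa b sb) g2 = some p) :
    isArrow p.1 ∧ isArrow p.2 := by
  cases g2 <;> rw [interT.eq_def] at h <;>
    simp [Option.bind_eq_some_iff, Option.pure_def, Option.some.injEq] at h
  obtain ⟨x, hx, h1, hy, z, h2, w, hw, h3, a', b', h4, hp⟩ := h
  rw [← hp]
  exact ⟨⟨_, _, _, _, rfl⟩, ⟨_, _, _, _, rfl⟩⟩

theorem interT_all_shape {r g S g2 p} (h : interT (.all r g S) g2 = some p) :
    isAll p.1 ∧ isAll p.2 := by
  cases g2 <;> rw [interT.eq_def] at h <;>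
    simp [Option.bind_eq_some_iff, Option.pure_def, Option.some.injEq] at h
  obtain ⟨hr, x, hx, h1, hy, b2, h2, hp⟩ := h
  rw [← hp]
  exact ⟨⟨_, _, _, rfl⟩, ⟨_, _, _, rfl⟩⟩

theorem ctrT_base_shape {B g2 g3 g4 p} (h : ctrT (.base B) g2 g3 g4 = some p) :
    p = (.base B, .base B) := by
  cases g2 <;> cases g3 <;> cases g4 <;> rw [ctrT.eq_def] at h <;> simp at h
  obtain ⟨⟨h1, h2, h3⟩, hp⟩ := h
  subst h1; subst h2; subst h3; exact hp.symm

theorem ctrT_arrow_shape {a sa b sb g2 g3 g4 p}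
    (h : ctrT (.arrow a sa b sb) g2 g3 g4 = some p) :
    isArrow p.1 ∧ isArrow p.2 := by
  cases g2 <;> cases g3 <;> cases g4 <;> rw [ctrT.eq_def] at h <;>
    simp [Option.bind_eq_some_iff, Option.pure_def, Option.some.injEq] at h
  obtain ⟨x, hx, h1, hy, z, h2, w, hw, h3, a', b', h4, hp⟩ := h
  rw [← hp]
  exact ⟨⟨_, _, _, _, rfl⟩, ⟨_, _, _, _, rfl⟩⟩

theorem ctrT_all_shape {r g S g2 g3 g4 p}
    (h : ctrT (.all r g S) g2 g3 g4 = some p) :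
    isAll p.1 ∧ isAll p.2 := by
  cases g2 <;> cases g3 <;> cases g4 <;> rw [ctrT.eq_def] at h <;>
    simp [Option.bind_eq_some_iff, Option.pure_def, Option.some.injEq] at h
  obtain ⟨hr, x, hx, h1, hy, b2, h2, hp⟩ := h
  rw [← hp]
  exact ⟨⟨_, _, _, rfl⟩, ⟨_, _, _, rfl⟩⟩

theorem ctrC_inv {ε1 ε2 ε'} (h : ctrC ε1 ε2 = some ε') :
    ∃ g1 g4 s1 s4, ctrT ε1.1.1 ε1.2.1 ε2.1.1 ε2.2.1 = some (g1, g4) ∧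
      ctrE ε1.1.2 ε1.2.2 ε2.1.2 ε2.2.2 = some (s1, s4) ∧
      ε' = ((g1, s1), (g4, s4)) := by
  rcases hT : ctrT ε1.1.1 ε1.2.1 ε2.1.1 ε2.2.1 with _ | ⟨g1, g4⟩
  · simp [ctrC, hT] at h
  rcases hE : ctrE ε1.1.2 ε1.2.2 ε2.1.2 ε2.2.2 with _ | ⟨s1, s4⟩
  · simp [ctrC, hT, hE] at h
  refine ⟨g1, g4, s1, s4, rfl, rfl, ?_⟩
  rw [ctrC, hT, hE] at h
  simpa using h.symm

theorem interC_inv {T1 T2 ε} (h : interC T1 T2 = some ε) :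
    ∃ g1 g2 s1 s2, interT T1.1 T2.1 = some (g1, g2) ∧
      interE T1.2 T2.2 = some (s1, s2) ∧ ε = ((g1, s1), (g2, s2)) := by
  rcases hT : interT T1.1 T2.1 with _ | ⟨g1, g2⟩
  · simp [interC, hT] at h
  rcases hE : interE T1.2 T2.2 with _ | ⟨s1, s2⟩
  · simp [interC, hT, hE] at h
  refine ⟨g1, g2, s1, s2, rfl, rfl, ?_⟩
  rw [interC, hT, hE] at h
  simpa using h.symm


theorem interT_skel_aux : ∀ n g1 g2 p, GTy.size g1 + GTy.size g2 ≤ n →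
    interT g1 g2 = some p → skel g1 = skel g2 := by
  intro n
  induction n with
  | zero =>
    intro g1 g2 p hle _
    have := GTy.size_pos g1; have := GTy.size_pos g2; omega
  | succ n ih =>
    intro g1 g2 p hle h
    cases g1 with
    | base B1 =>
      cases g2 with
      | base B2 =>
        rw [interT.eq_def] at h; simp at h
        rw [h.1]
      | arrow a sa b sb => rw [interT.eq_def] at h; simp at h
      | all r g S => rw [interT.eq_def] at h; simp at h
    | arrow a1 sa1 b1 sb1 =>
      cases g2 with
      | base B2 => rw [interT.eq_def] at h; simp at h
      | arrow a2 sa2 b2 sb2 =>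
        rw [interT.eq_def] at h
        simp [Option.bind_eq_some_iff] at h
        obtain ⟨x, hx, h1, hy, z, h2, w, hw, h3, a', b', h4, hp⟩ := h
        have e1 : skel a2 = skel a1 :=
          ih a2 a1 _ (by simp [GTy.size] at hle ⊢; omega) h1
        have e2 : skel b1 = skel b2 :=
          ih b1 b2 _ (by simp [GTy.size] at hle ⊢; omega) h3
        simp [skel, e1, e2]
      | all r g S => rw [interT.eq_def] at h; simp at h
    | all r1 g1' S1 =>
      cases g2 with
      | base B2 => rw [interT.eq_def] at h; simp at h
      | arrow a2 sa2 b2 sb2 => rw [interT.eq_def] at h; simp at h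
      | all r2 g2' S2 =>
        rw [interT.eq_def] at h
        by_cases hr : r1 = r2
        · simp [hr, Option.bind_eq_some_iff] at h
          obtain ⟨x, hx, h1, hy, b2, h2, hp⟩ := h
          have e1 : skel g1' = skel g2' :=
            ih g1' g2' _ (by simp [GTy.size] at hle ⊢; omega) h1
          simp [skel, hr, e1]
        · simp [hr] at h

theorem interT_skel {g1 g2 p} (h : interT g1 g2 = some p) : skel g1 = skel g2 :=
  interT_skel_aux _ g1 g2 p le_rfl h

/-! ### Multi-step congruence -/

theorem steps_opL {o : Op} {b a a' : CExpr} (h : Steps a a') :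
    Steps (.op o a b) (.op o a' b) :=
  Relation.ReflTransGen.lift (fun x => CExpr.op o x b) (fun _ _ hs => Step.opL hs) _ _ h

theorem steps_opR {o : Op} {v b b' : CExpr} (hv : IsVal v) (h : Steps b b') :
    Steps (.op o v b) (.op o v b') :=
  Relation.ReflTransGen.lift (fun x => CExpr.op o v x) (fun _ _ hs => Step.opR hv hs) _ _ h

theorem steps_appL {b a a' : CExpr} (h : Steps a a') :
    Steps (.app a b) (.app a' b) :=
  Relation.ReflTransGen.lift (fun x => CExpr.app x b) (fun _ _ hs => Step.appL hs) _ _ h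

theorem steps_appR {v b b' : CExpr} (hv : IsVal v) (h : Steps b b') :
    Steps (.app v b) (.app v b') :=
  Relation.ReflTransGen.lift (fun x => CExpr.app v x) (fun _ _ hs => Step.appR hv hs) _ _ h

theorem steps_tapp {S : GEnv} {a a' : CExpr} (h : Steps a a') :
    Steps (.tapp a S) (.tapp a' S) :=
  Relation.ReflTransGen.lift (fun x => CExpr.tapp x S) (fun _ _ hs => Step.tappC hs) _ _ h

theorem steps_tlam {r : String} {a a' : CExpr} (h : Steps a a') :
    Steps (.tlam r a) (.tlam r a') :=
  Relation.ReflTransGen.lift (fun x => CExpr.tlam r x) (fun _ _ hs => Step.tlamC hs) _ _ h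

theorem steps_ascr {ε : Ev} {T : CTy} {a a' : CExpr} (h : Steps a a') :
    Steps (.ascr ε a T) (.ascr ε a' T) :=
  Relation.ReflTransGen.lift (fun x => CExpr.ascr ε x T) (fun _ _ hs => Step.ascrC hs) _ _ h

/-! ### Safety of ascription, application, instantiation -/

theorem goodv_reascribe {s ε1 u T1 ε2 ε' T2} (hg : GoodV s (.ascr ε1 u T1))
    (hc : ctrC ε1 ε2 = some ε') (hT : skel T2.1 = s) :
    GoodV s (.ascr ε' u T2) := by
  obtain ⟨g1, g4, s1', s4', hctrT, hctrE, rfl⟩ := ctrC_inv hc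
  obtain ⟨gT2, ST2⟩ := T2
  cases s with
  | base B =>
    obtain ⟨Sa, Sb, Sc, c, heq, hcB⟩ := hg
    injection heq with h1 h2 h3
    subst h2
    have hε11 : ε1.1.1 = .base B := by rw [h1]
    rw [hε11] at hctrT
    have := ctrT_base_shape hctrT
    injection this with hg1 hg4
    subst hg1; subst hg4
    have hT2 : gT2 = .base B := skel_base_inv hT
    subst hT2
    exact ⟨_, _, _, c, rfl, hcB⟩
  | arrow sa sb =>
    obtain ⟨ε, x, Tx, eb, gd, Sd, gc, Sc, ST, heq, hA1, hA2, hTx, hgc, hfv, hbody⟩ := hg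
    injection heq with h1 h2 h3
    subst h1; subst h2
    obtain ⟨a, saE, b, sbE, hA1'⟩ := hA1
    rw [hA1'] at hctrT
    have hsh := ctrT_arrow_shape hctrT
    obtain ⟨gd2, sd2, gc2, sc2, hgT2, hsa, hsb⟩ := skel_arrow_inv hT
    subst hgT2
    obtain ⟨a1, b1, c1, d1, hg1⟩ := hsh.1
    obtain ⟨a4, b4, c4, d4, hg4⟩ := hsh.2
    simp only at hg1 hg4
    subst hg1; subst hg4
    exact ⟨_, x, Tx, eb, gd2, sd2, gc2, sc2, ST2, rfl,
      ⟨_, _, _, _, rfl⟩, ⟨_, _, _, _, rfl⟩, hTx, hsb, hfv, hbody⟩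
  | all sb =>
    obtain ⟨ε, r, vb, r2, g', S', ST, heq, hA1, hA2, hsk, hvb, hcond⟩ := hg
    injection heq with h1 h2 h3
    subst h1; subst h2
    obtain ⟨ra, ga, Sga, hA1'⟩ := hA1
    rw [hA1'] at hctrT
    have hsh := ctrT_all_shape hctrT
    obtain ⟨r3, g3, S3, hgT2, hsk3⟩ := skel_all_inv hT
    subst hgT2
    obtain ⟨x1, y1, z1, hg1⟩ := hsh.1
    obtain ⟨x4, y4, z4, hg4⟩ := hsh.2
    simp only at hg1 hg4
    subst hg1; subst hg4
    exact ⟨_, r, vb, r3, g3, S3, ST2, rfl,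
      ⟨_, _, _, rfl⟩, ⟨_, _, _, rfl⟩, hsk3, hvb, hcond⟩

theorem safe_ascr {s e ε T} (hs : Safe s e) (hT : skel T.1 = s) :
    Safe s (.ascr ε e T) := by
  obtain ⟨r, hst, hr⟩ := hs
  rcases hr with rfl | hg
  · exact ⟨.err, (steps_ascr hst).tail Step.ascrErrP, Or.inl rfl⟩
  · obtain ⟨ε1, u, T1, rfl, hu⟩ := goodv_form hg
    cases hc : ctrC ε1 ε with
    | none =>
      exact ⟨.err, (steps_ascr hst).tail (Step.ascrErr hu hc), Or.inl rfl⟩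
    | some ε'' =>
      exact ⟨.ascr ε'' u T, (steps_ascr hst).tail (Step.ascrOk hu hc),
        Or.inr (goodv_reascribe hg hc hT)⟩

theorem app_safe {s1 s2 vf va} (hf : GoodV (.arrow s1 s2) vf) (ha : GoodV s1 va) :
    Safe s2 (.app vf va) := by
  obtain ⟨ε, x, Tx, eb, gd, Sd, gc, Sc, ST, rfl, hA1, hA2, hTx, hgc, hfv, hbody⟩ := hf
  obtain ⟨ε1, u, T1, rfl, hu⟩ := goodv_form ha
  obtain ⟨⟨g11, S11⟩, ⟨g21, S21⟩⟩ := ε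
  obtain ⟨a1, sa1, b1, sb1, h11⟩ := hA1
  obtain ⟨a2, sa2, b2, sb2, h21⟩ := hA2
  simp only at h11 h21
  subst h11; subst h21
  have hd : domEv ((.arrow a1 sa1 b1 sb1, S11), (.arrow a2 sa2 b2 sb2, S21)) =
      some ((a2, sa2), (a1, sa1)) := by simp [domEv, domC]
  cases hc : ctrC ε1 ((a2, sa2), (a1, sa1)) with
  | none =>
    exact ⟨.err, Relation.ReflTransGen.single (Step.appErr hu hd hc), Or.inl rfl⟩
  | some ε' =>
    have hcod : codEv ((.arrow a1 sa1 b1 sb1, S11), (.arrow a2 sa2 b2 sb2, S21)) =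
        some ((b1, addE sb1 S11), (b2, addE sb2 S21)) := by simp [codEv, codC]
    have hcodT : codC (.arrow gd Sd gc Sc, ST) = some (gc, addE Sc ST) := by
      simp [codC]
    have hw : GoodV s1 (.ascr ε' u Tx) := goodv_reascribe ha hc hTx
    have hbody' := hbody eb (er_refl eb) _ hw
    have hres : Safe s2 (.ascr (( b1, addE sb1 S11), (b2, addE sb2 S21))
        (csubst x (.ascr ε' u Tx) eb) (gc, addE Sc ST)) :=
      safe_ascr hbody' hgc
    obtain ⟨r, hst, hr⟩ := hres
    exact ⟨r, Relation.ReflTransGen.head (Step.appOk hu hd hc hcod hcodT) hst, hr⟩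

theorem tapp_safe {s v Sr} (hg : GoodV (.all s) v) : Safe s (.tapp v Sr) := by
  obtain ⟨ε, r, vb, r2, g', S', ST, rfl, hA1, hA2, hsk, hvb, hcond⟩ := hg
  obtain ⟨⟨g11, S11⟩, ⟨g21, S21⟩⟩ := ε
  obtain ⟨ra, ga, Sga, h11⟩ := hA1
  obtain ⟨rb, gb, Sgb, h21⟩ := hA2
  simp only at h11 h21
  subst h11; subst h21
  have hie : instEv ((.all ra ga Sga, S11), (.all rb gb Sgb, S21)) Sr =
      some ((substT ra Sr ga, addE (substDVE ra Sr Sga) S11),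
            (substT rb Sr gb, addE (substDVE rb Sr Sgb) S21)) := by
    simp [instEv, instC]
  have hiT : instC (.all r2 g' S', ST) Sr =
      some (substT r2 Sr g', addE (substDVE r2 Sr S') ST) := by simp [instC]
  have hwg : GoodV s (dsubst r Sr vb) := hcond vb (er_refl vb) Sr
  have hres : Safe s (.ascr ((substT ra Sr ga, addE (substDVE ra Sr Sga) S11),
      (substT rb Sr gb, addE (substDVE rb Sr Sgb) S21))
      (dsubst r Sr vb) (substT r2 Sr g', addE (substDVE r2 Sr S') ST)) := by
    refine safe_ascr ⟨_, Relation.ReflTransGen.refl, Or.inr hwg⟩ ?_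
    simp only
    rw [skel_substT]
    exact hsk
  obtain ⟨rr, hst, hr⟩ := hres
  exact ⟨rr, Relation.ReflTransGen.head (Step.inst hvb hie hiT) hst, hr⟩


/-! ### Instantiations of elaborated code -/

inductive Inst : GTEnv → CExpr → CExpr → Prop where
  | const : Inst Γ (.const c) (.const c)
  | op : Inst Γ a' a → Inst Γ b' b → Inst Γ (.op o a' b') (.op o a b)
  | var : Inst Γ (.var x) (.var x)
  | var_val : Γ x = some T → GoodV (skel T.1) v → Inst Γ v (.var x)
  | lam : CTyEr T' T → Inst (Function.update Γ x none) e' e →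
      Inst Γ (.lam x T' e') (.lam x T e)
  | app : Inst Γ a' a → Inst Γ b' b → Inst Γ (.app a' b') (.app a b)
  | tlam : Inst Γ e' e → Inst Γ (.tlam r e') (.tlam r e)
  | tapp : Inst Γ e' e → Inst Γ (.tapp e' S') (.tapp e S)
  | ascr : EvEr ε' ε → Inst Γ e' e → CTyEr T' T →
      Inst Γ (.ascr ε' e' T') (.ascr ε e T)
  | err : Inst Γ .err .err

theorem inst_refl : ∀ e (Γ : GTEnv), Inst Γ e e := by
  intro e
  induction e with
  | const c => intro Γ; exact .const
  | op o a b iha ihb => intro Γ; exact .op (iha Γ) (ihb Γ)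
  | var y => intro Γ; exact .var
  | lam y T e ih => intro Γ; exact .lam (ctyEr_refl _) (ih _)
  | app a b iha ihb => intro Γ; exact .app (iha Γ) (ihb Γ)
  | tlam r e ih => intro Γ; exact .tlam (ih Γ)
  | tapp e S ih => intro Γ; exact .tapp (ih Γ)
  | ascr ε e T ih => intro Γ; exact .ascr (evEr_refl _) (ih Γ) (ctyEr_refl _)
  | err => intro Γ; exact .err

theorem inst_mono {Γ Γ' : GTEnv} {e' e} (h : Inst Γ e' e)
    (hsub : ∀ y T, Γ y = some T → Γ' y = some T) : Inst Γ' e' e := by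
  induction h generalizing Γ' with
  | const => exact .const
  | op ha hb iha ihb => exact .op (iha hsub) (ihb hsub)
  | var => exact .var
  | var_val hx hg => exact .var_val (hsub _ _ hx) hg
  | @lam _ T' T x e'' e hT hi ih =>
    refine .lam hT (ih ?_)
    intro y Ty hy
    by_cases hxy : y = x
    · subst hxy; simp [Function.update] at hy
    · simp [Function.update, hxy] at hy ⊢
      exact hsub _ _ hy
  | app ha hb iha ihb => exact .app (iha hsub) (ihb hsub)
  | tlam hi ih => exact .tlam (ih hsub)
  | tapp hi ih => exact .tapp (ih hsub)
  | ascr hε hi hT ih => exact .ascr hε (ih hsub) hT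
  | err => exact .err

theorem er_inst {Γ : GTEnv} {e'' e' e} (her : Er e'' e') (h : Inst Γ e' e) :
    Inst Γ e'' e := by
  induction h generalizing e'' with
  | const => cases her; exact .const
  | op ha hb iha ihb => cases her with
    | op h1 h2 => exact .op (iha h1) (ihb h2)
  | var => cases her; exact .var
  | var_val hx hg => exact .var_val hx (goodv_er her hg)
  | lam hT hi ih => cases her with
    | lam hT' h1 => exact .lam (ctyEr_trans hT' hT) (ih h1)
  | app ha hb iha ihb => cases her with
    | app h1 h2 => exact .app (iha h1) (ihb h2)
  | tlam hi ih => cases her with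
    | tlam h1 => exact .tlam (ih h1)
  | tapp hi ih => cases her with
    | tapp h1 => exact .tapp (ih h1)
  | ascr hε hi hT ih => cases her with
    | ascr hε' h1 hT' =>
      exact .ascr (evEr_trans hε' hε) (ih h1) (ctyEr_trans hT' hT)
  | err => cases her; exact .err

theorem inst_csubst {Γ : GTEnv} {e' e} (h : Inst Γ e' e) :
    ∀ x T w, Γ x = some T → GoodV (skel T.1) w → Inst Γ (csubst x w e') e := by
  induction h with
  | const => intro x T w hx hw; exact .const
  | op ha hb iha ihb =>
    intro x T w hx hw
    exact .op (iha x T w hx hw) (ihb x T w hx hw)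
  | @var _ y =>
    intro x T w hx hw
    by_cases hyx : y = x
    · subst hyx; simp only [csubst, if_true]
      exact .var_val hx hw
    · simp only [csubst, hyx, if_false]
      exact .var
  | var_val hx' hg =>
    intro x T w hx hw
    rw [csubst_not_mem _ (by rw [goodv_closed hg]; exact Set.notMem_empty x)]
    exact .var_val hx' hg
  | @lam _ T' Tl y e'' el hT hi ih =>
    intro x T w hx hw
    by_cases hyx : y = x
    · subst hyx; simp only [csubst, if_true]
      exact .lam hT hi
    · simp only [csubst, hyx, if_false]
      refine .lam hT (ih x T w ?_ hw)
      simp only [Function.update]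
      split
      · next heq => exact absurd heq.symm hyx
      · exact hx
  | app ha hb iha ihb =>
    intro x T w hx hw
    exact .app (iha x T w hx hw) (ihb x T w hx hw)
  | tlam hi ih => intro x T w hx hw; exact .tlam (ih x T w hx hw)
  | tapp hi ih => intro x T w hx hw; exact .tapp (ih x T w hx hw)
  | ascr hε hi hT ih => intro x T w hx hw; exact .ascr hε (ih x T w hx hw) hT
  | err => intro x T w hx hw; exact .err

theorem inst_fvt {Γ : GTEnv} {e' e} (h : Inst Γ e' e) : FVt e' ⊆ FVt e := by
  induction h with
  | const => simp [FVt]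
  | op ha hb iha ihb =>
    simp only [FVt]; exact Set.union_subset_union iha ihb
  | var => simp [FVt]
  | var_val hx hg => rw [goodv_closed hg]; simp
  | lam hT hi ih =>
    simp only [FVt]; exact Set.diff_subset_diff_left ih
  | app ha hb iha ihb =>
    simp only [FVt]; exact Set.union_subset_union iha ihb
  | tlam hi ih => simpa [FVt] using ih
  | tapp hi ih => simpa [FVt] using ih
  | ascr hε hi hT ih => simpa [FVt] using ih
  | err => simp [FVt]


/-! ### Inversion lemmas for operations on types -/

def opRes : Op → BaseTy
  | .le => .bool
  | _ => .real

theorem opCTy_inv {o Ta Tb T} (h : opCTy o Ta Tb = some T) :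
    Ta.1 = .base .real ∧ Tb.1 = .base .real ∧ T.1 = .base (opRes o) := by
  rw [opCTy.eq_def] at h
  split at h <;>
    first
      | (simp only [Option.some.injEq] at h; subst h; simp_all [opRes])
      | simp_all [opRes]

theorem opCTy_real (o : Op) (S1 S2 : GEnv) :
    ∃ SS, opCTy o (.base .real, S1) (.base .real, S2) = some (.base (opRes o), SS) := by
  cases o <;> exact ⟨_, rfl⟩

theorem opDenote_real (o : Op) (a b : ℝ) :
    ∃ c, opDenote o (.r a) (.r b) = some c ∧ constBTy c = opRes o := by
  cases o <;> exact ⟨_, rfl, rfl⟩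

theorem opEv_real (o : Op) (Sa1 Sb1 Sa2 Sb2 : GEnv) :
    ∃ Ea Eb, opEv o ((.base .real, Sa1), (.base .real, Sb1))
      ((.base .real, Sa2), (.base .real, Sb2)) =
      some ((.base (opRes o), Ea), (.base (opRes o), Eb)) := by
  obtain ⟨Ea, hEa⟩ := opCTy_real o Sa1 Sa2
  obtain ⟨Eb, hEb⟩ := opCTy_real o Sb1 Sb2
  exact ⟨Ea, Eb, by simp [opEv, hEa, hEb]⟩

theorem domC_inv {Ta Td} (h : domC Ta = some Td) :
    ∃ g1 S1 g2 S2 S, Ta = (.arrow g1 S1 g2 S2, S) ∧ Td = (g1, S1) := by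
  obtain ⟨g, S⟩ := Ta
  cases g <;> simp [domC] at h
  exact ⟨_, _, _, _, _, rfl, h.symm⟩

theorem instC_inv {T Sr T'} (h : instC T Sr = some T') :
    ∃ r g Sg S, T = (.all r g Sg, S) ∧
      T' = (substT r Sr g, addE (substDVE r Sr Sg) S) := by
  obtain ⟨g0, S0⟩ := T
  cases g0 <;> simp [instC] at h
  exact ⟨_, _, _, _, rfl, h.symm⟩

theorem elab_fv {Γ e ec T} (h : Elab Γ e ec T) :
    ∀ x, x ∈ FVt ec → ∃ Tx, Γ x = some Tx := by
  induction h with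
  | const hI => intro x hx; simp [FVt] at hx
  | op ha hb hop iha ihb =>
    intro x hx
    simp only [FVt, Set.mem_union] at hx
    rcases hx with hx | hx
    · exact iha x hx
    · exact ihb x hx
  | var hx =>
    intro y hy
    simp only [FVt, Set.mem_singleton_iff] at hy
    subst hy
    exact ⟨_, hx⟩
  | @lam Γ x T1 e e' T2 ε hE hI ihE =>
    intro y hy
    simp only [FVt, Set.mem_diff, Set.mem_singleton_iff] at hy
    obtain ⟨Tx, hTx⟩ := ihE y hy.1
    refine ⟨Tx, ?_⟩
    rw [Function.update] at hTx
    simp only at hTx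
    split at hTx
    · next heq => exact absurd heq hy.2
    · exact hTx
  | app ha hb hTd hI hTc iha ihb =>
    intro y hy
    simp only [FVt, Set.mem_union] at hy
    rcases hy with hy | hy
    · exact iha y hy
    · exact ihb y hy
  | tlam hE hI ihE => intro y hy; exact ihE y (by simpa [FVt] using hy)
  | tapp hE hiC ihE => intro y hy; exact ihE y (by simpa [FVt] using hy)
  | ascr hE hI ihE => intro y hy; exact ihE y (by simpa [FVt] using hy)

/-! ### The fundamental lemma -/

theorem fundamental : ∀ {Γ e ec T}, Elab Γ e ec T →
    ∀ ec', Inst Γ ec' ec → FVt ec' = ∅ → Safe (skel T.1) ec' := by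
  intro Γ e ec T h
  induction h with
  | @const c Γ' ε hI =>
    intro ec' hInst hfv
    cases hInst with
    | ascr hε hInst2 hT =>
      rename_i ε0 e0 T0
      cases hInst2
      obtain ⟨g1, g2, s1, s2, hT12, hE12, rfl⟩ := interC_inv hI
      have hb1 := interT_base_shape hT12
      injection hb1 with hg1 hg2
      subst hg1; subst hg2
      obtain ⟨⟨ga, sa⟩, ⟨gb, sb⟩⟩ := ε0
      obtain ⟨gT, sT⟩ := T0
      have e1 : TyEr ga (GTy.base (constBTy c)) := hε.1
      have e2 : TyEr gb (GTy.base (constBTy c)) := hε.2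
      have e3 : TyEr gT (GTy.base (constBTy c)) := hT
      rw [tyEr_base_inv e1, tyEr_base_inv e2, tyEr_base_inv e3]
      refine ⟨_, Relation.ReflTransGen.refl, Or.inr ?_⟩
      show GoodV (skel (.base (constBTy c))) _
      simp only [skel]
      exact ⟨sa, sb, sT, c, rfl, rfl⟩
  | @op Γ'' a a' Ta b b' Tb o T2 ha hb hop iha ihb =>
    intro ec' hInst hfv
    cases hInst with
    | op hIa hIb =>
      rename_i aX bX
      simp only [FVt, Set.union_empty_iff] at hfv
      obtain ⟨hTa1, hTb1, hT1⟩ := opCTy_inv hop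
      obtain ⟨ra, hstA, hrA⟩ := iha _ hIa hfv.1
      rcases hrA with rfl | hgA
      · exact ⟨.err, (steps_opL hstA).tail Step.opLErr, Or.inl rfl⟩
      · have hvA : IsVal ra := goodv_isval hgA
        obtain ⟨rb, hstB, hrB⟩ := ihb _ hIb hfv.2
        rcases hrB with rfl | hgB
        · exact ⟨.err, ((steps_opL hstA).trans (steps_opR hvA hstB)).tail
            (Step.opRErr hvA), Or.inl rfl⟩
        · have hgA' : GoodV (.base .real) ra := by
            rw [hTa1] at hgA; simpa [skel] using hgA
          have hgB' : GoodV (.base .real) rb := by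
            rw [hTb1] at hgB; simpa [skel] using hgB
          obtain ⟨Sa1, Sb1, Sc1, c1, rfl, hc1⟩ := hgA'
          obtain ⟨Sa2, Sb2, Sc2, c2, rfl, hc2⟩ := hgB'
          cases c1 with
          | b b1 => simp [constBTy] at hc1
          | r x1 =>
            cases c2 with
            | b b2 => simp [constBTy] at hc2
            | r x2 =>
              obtain ⟨c0, hden, hcres⟩ := opDenote_real o x1 x2
              obtain ⟨Ea, Eb, hopev⟩ := opEv_real o Sa1 Sb1 Sa2 Sb2
              obtain ⟨SS, hopc⟩ := opCTy_real o Sc1 Sc2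
              refine ⟨_, ((steps_opL hstA).trans (steps_opR hvA hstB)).tail
                (Step.op hden hopev hopc), Or.inr ?_⟩
              rw [hT1]
              simp only [skel]
              exact ⟨Ea, Eb, SS, c0, rfl, hcres⟩
  | var hx =>
    intro ec' hInst hfv
    cases hInst with
    | var => simp [FVt] at hfv
    | var_val hx' hg =>
      rw [hx] at hx'
      injection hx' with hTT
      subst hTT
      exact ⟨ec', Relation.ReflTransGen.refl, Or.inr hg⟩
  | @lam Γ' x T1 e0 e0' T2 ε hE hI ihE =>
    intro ec' hInst hfv
    cases hInst with
    | ascr hε hInst2 hT =>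
      rename_i ε0 e1 T0
      cases hInst2 with
      | lam hTx hInstB =>
        rename_i Tx' eb'
        obtain ⟨g1, g2, s1, s2, hT12, hE12, rfl⟩ := interC_inv hI
        have hsh := interT_arrow_shape hT12
        obtain ⟨a1, sa1, b1, sb1, hg1⟩ := hsh.1
        obtain ⟨a2, sa2, b2, sb2, hg2⟩ := hsh.2
        simp only at hg1 hg2
        have he1 : TyEr ε0.1.1 g1 := hε.1
        have he2 : TyEr ε0.2.1 g2 := hε.2
        rw [hg1] at he1; rw [hg2] at he2
        obtain ⟨x1, y1, z1, w1, hE1, _, _⟩ := tyEr_arrow_inv he1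
        obtain ⟨x2, y2, z2, w2, hE2, _, _⟩ := tyEr_arrow_inv he2
        obtain ⟨gT, ST⟩ := T0
        have he3 : TyEr gT (.arrow T1.1 T1.2 T2.1 T2.2) := hT
        obtain ⟨gd, Sd, gc, Sc, hgT, hd, hc⟩ := tyEr_arrow_inv he3
        subst hgT
        refine ⟨_, Relation.ReflTransGen.refl, Or.inr ?_⟩
        show GoodV (skel (.arrow T1.1 T1.2 T2.1 T2.2)) _
        simp only [skel]
        refine ⟨ε0, x, Tx', eb', gd, Sd, gc, Sc, ST, rfl,
          ⟨_, _, _, _, hE1⟩, ⟨_, _, _, _, hE2⟩,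
          tyEr_skel (hTx : TyEr Tx'.1 T1.1), tyEr_skel hc, ?_, ?_⟩
        · simp only [FVt] at hfv
          exact Set.diff_eq_empty.mp hfv
        · intro eb'' her w hw
          have hI2 : Inst (Function.update Γ' x none) eb'' e0' := er_inst her hInstB
          have hI3 : Inst (Function.update Γ' x (some T1)) eb'' e0' := by
            refine inst_mono hI2 ?_
            intro y Ty hy
            rw [Function.update] at hy ⊢
            simp only at hy ⊢
            split at hy
            · exact absurd hy (by simp)
            · next hne => simp only [hne, if_false]; exact hy
          have hI4 : Inst (Function.update Γ' x (some T1)) (csubst x w eb'') e0' := by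
            refine inst_csubst hI3 x T1 w ?_ hw
            simp [Function.update]
          have hclosed : FVt (csubst x w eb'') = ∅ := by
            rw [Set.eq_empty_iff_forall_notMem]
            intro y hy
            have h1 := FVt_csubst (x := x) (w := w) eb'' hy
            rw [er_fvt her, goodv_closed hw] at h1
            simp only [FVt] at hfv
            rw [hfv] at h1
            simpa using h1
          exact ihE _ hI4 hclosed
  | @app Γ' a a' Ta b b' Tb Td ε2 Tc ha hb hTd hI2 hTc iha ihb =>
    intro ec' hInst hfv
    cases hInst with
    | app hIa hIArg =>
      rename_i aX argX
      cases hIArg with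
      | ascr hε2 hIb hTd' =>
        rename_i ε2' bX Td'
        simp only [FVt, Set.union_empty_iff] at hfv
        obtain ⟨g1, S1, g2, S2, Sa, hTa, hTd1⟩ := domC_inv hTd
        subst hTd1
        rw [hTa] at hTc
        simp only [codC, Option.some.injEq] at hTc
        obtain ⟨ra, hstA, hrA⟩ := iha _ hIa hfv.1
        rcases hrA with rfl | hgA
        · exact ⟨.err, (steps_appL hstA).tail Step.appLErr, Or.inl rfl⟩
        · have hvA : IsVal ra := goodv_isval hgA
          have hgA' : GoodV (.arrow (skel g1) (skel g2)) ra := by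
            rw [hTa] at hgA; simpa [skel] using hgA
          have hskb : skel Tb.1 = skel g1 := by
            obtain ⟨q1, q2, q3, q4, hq, _, _⟩ := interC_inv hI2
            exact interT_skel hq
          have hsArg : Safe (skel g1) (.ascr ε2' bX Td') := by
            refine safe_ascr (hskb ▸ ihb _ hIb hfv.2) ?_
            have : TyEr Td'.1 g1 := hTd'
            rw [tyEr_skel this]
          obtain ⟨rb, hstB, hrB⟩ := hsArg
          rcases hrB with rfl | hgB
          · exact ⟨.err, ((steps_appL hstA).trans (steps_appR hvA hstB)).tail
              (Step.appRErr hvA), Or.inl rfl⟩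
          · obtain ⟨rr, hstR, hrR⟩ := app_safe hgA' hgB
            refine ⟨rr, ((steps_appL hstA).trans (steps_appR hvA hstB)).trans hstR, ?_⟩
            rw [← hTc]
            simpa [skel] using hrR
  | @tlam Γ' e0 e0' T0 r ε hE hI ihE =>
    intro ec' hInst hfv
    cases hInst with
    | ascr hε hInst2 hT =>
      rename_i ε0 e1 T0'
      cases hInst2 with
      | tlam hInstB =>
        rename_i eb'
        obtain ⟨rb, hstB, hrB⟩ := ihE _ hInstB (by simpa [FVt] using hfv)
        rcases hrB with rfl | hgB
        · refine ⟨.err, ?_, Or.inl rfl⟩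
          exact ((steps_ascr (steps_tlam hstB)).tail (Step.ascrC Step.tlamErr)).tail
            Step.ascrErrP
        · refine ⟨.ascr ε0 (.tlam r rb) T0', steps_ascr (steps_tlam hstB), Or.inr ?_⟩
          obtain ⟨g1, g2, s1, s2, hT12, hE12, rfl⟩ := interC_inv hI
          have hsh := interT_all_shape hT12
          obtain ⟨ra1, ga1, Sa1, hg1⟩ := hsh.1
          obtain ⟨ra2, ga2, Sa2, hg2⟩ := hsh.2
          simp only at hg1 hg2
          have he1 : TyEr ε0.1.1 g1 := hε.1
          have he2 : TyEr ε0.2.1 g2 := hε.2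
          rw [hg1] at he1; rw [hg2] at he2
          obtain ⟨x1, y1, hE1, _⟩ := tyEr_all_inv he1
          obtain ⟨x2, y2, hE2, _⟩ := tyEr_all_inv he2
          obtain ⟨gT, ST⟩ := T0'
          have he3 : TyEr gT (.all r T0.1 T0.2) := hT
          obtain ⟨g0, S0, hgT, hg0⟩ := tyEr_all_inv he3
          subst hgT
          show GoodV (skel (.all r T0.1 T0.2)) _
          simp only [skel]
          refine ⟨ε0, r, rb, r, g0, S0, ST, rfl,
            ⟨_, _, _, hE1⟩, ⟨_, _, _, hE2⟩, tyEr_skel hg0, goodv_isval hgB, ?_⟩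
          intro vb' her Sr
          exact goodv_dsubst (goodv_er her hgB) r Sr
  | @tapp Γ' e0 e0' T0 Sr T' hE hiC ihE =>
    intro ec' hInst hfv
    cases hInst with
    | tapp hIe =>
      rename_i eX Sr'
      obtain ⟨r0, g0, Sg0, S0, hT0, hT'⟩ := instC_inv hiC
      obtain ⟨ra, hstA, hrA⟩ := ihE _ hIe (by simpa [FVt] using hfv)
      rcases hrA with rfl | hgA
      · exact ⟨.err, (steps_tapp hstA).tail Step.tappErr, Or.inl rfl⟩
      · have hgA' : GoodV (.all (skel g0)) ra := by
          rw [hT0] at hgA; simpa [skel] using hgA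
        obtain ⟨rr, hstR, hrR⟩ := tapp_safe (Sr := Sr') hgA'
        refine ⟨rr, (steps_tapp hstA).trans hstR, ?_⟩
        rw [hT']
        simpa [skel_substT] using hrR
  | @ascr Γ' e0 e0' T0 T' ε hE hI ihE =>
    intro ec' hInst hfv
    cases hInst with
    | ascr hε hIe hT' =>
      rename_i ε0 eX T0'
      have hs := ihE _ hIe (by simpa [FVt] using hfv)
      obtain ⟨q1, q2, q3, q4, hq, _, _⟩ := interC_inv hI
      have hskeq : skel T0.1 = skel T'.1 := interT_skel hq
      refine safe_ascr (hskeq ▸ hs) ?_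
      have : TyEr T0'.1 T'.1 := hT'
      rw [tyEr_skel this]

end GS
open GS in
/-- Type Safety of GS (Proposition 1): a well-typed closed GS expression
(i.e. one that successfully elaborates) evaluates to a result r, where r is
either a GSCheck value or the error term; in particular it does not get
stuck. -/
theorem gs_type_safety
    (e : GExpr) (e' : CExpr) (T : CTy) (h : Elab emptyEnv e e' T) :
    ∃ r, Steps e' r ∧ (IsVal r ∨ r = CExpr.err) := by
  have hclosed : FVt e' = ∅ := by
    rw [Set.eq_empty_iff_forall_notMem]
    intro x hx
    obtain ⟨Tx, hTx⟩ := elab_fv h x hx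
    simp [emptyEnv] at hTx
  obtain ⟨r, hst, hr⟩ := fundamental h e' (inst_refl e' emptyEnv) hclosed
  rcases hr with rfl | hg
  · exact ⟨_, hst, Or.inr rfl⟩
  · exact ⟨_, hst, Or.inl (goodv_isval hg)⟩
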